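/- Let K be a field and let a, b, c, d ∈ K. The ideals ⟨y² + axy + bx², x⁵⟩ and ⟨y⁵, x² + cxy + dy²⟩ of the polynomial ring K[x,y] are equal if and only if a⁴ − 3a²b + b² = 0, c = ad, and bd = 1. -/

import Mathlib

open MvPolynomial

namespace EdgeSchemeAux

variable {K : Type*} [Field K]

noncomputable def psi (K : Type*) [Field K] :
    MvPolynomial (Fin 2) K →ₐ[K] MvPolynomial (Fin 2) K := aeval ![0, X 1]

@[simp] lemma psi_X0 : psi K (X 0) = 0 := by simp [psi]
@[simp] lemma psi_X1 : psi K (X 1) = X 1 := by simp [psi]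
@[simp] lemma psi_C (k : K) : psi K (C k) = C k := by simp [psi]

lemma X0_dvd_sub_psi (u : MvPolynomial (Fin 2) K) : X 0 ∣ u - psi K u := by
  induction u using MvPolynomial.induction_on with
  | C k => simp
  | add p q hp hq => simpa [map_add, sub_add_sub_comm] using dvd_add hp hq
  | mul_X p n hp =>
      fin_cases n
      · show X 0 ∣ p * X 0 - psi K (p * X 0)
        simp only [map_mul, psi_X0, mul_zero, sub_zero]
        exact dvd_mul_left _ _
      · show X 0 ∣ p * X 1 - psi K (p * X 1)
        simp only [map_mul, psi_X1]
        have h : p * X 1 - psi K p * X 1 = (p - psi K p) * X 1 := by ring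
        rw [h]
        exact hp.mul_right _

lemma coeff_y_mul_ysq (P : MvPolynomial (Fin 2) K) :
    coeff (Finsupp.single 1 1) (P * (X 1)^2) = 0 := by
  rw [pow_two, ← mul_assoc, coeff_mul_X']
  simp [coeff_mul_X']

lemma coeff_zero_mul_ysq (P : MvPolynomial (Fin 2) K) :
    coeff 0 (P * (X 1)^2) = 0 := by
  rw [pow_two, ← mul_assoc, coeff_mul_X']
  simp

lemma psi_eq {f u v w : MvPolynomial (Fin 2) K} (k : ℕ) (hf : psi K f = (X 1)^2)
    (h : u * f + v * X 0 ^ (k+1) = w) : psi K u * (X 1)^2 = psi K w := by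
  have h2 := congrArg (psi K) h
  simp only [map_add, map_mul, map_pow, hf, psi_X0, zero_pow (Nat.succ_ne_zero k),
    mul_zero, add_zero] at h2
  exact h2

lemma peel {f u v w w' t : MvPolynomial (Fin 2) K} (k : ℕ)
    (hu : psi K u = t)
    (h : u * f + v * X 0 ^ (k+1) = w)
    (hw : w - t * f = X 0 * w') :
    ∃ u', u' * f + v * X 0 ^ k = w' := by
  obtain ⟨u₁, hu₁⟩ := X0_dvd_sub_psi u
  rw [hu] at hu₁
  refine ⟨u₁, mul_left_cancel₀ (X_ne_zero (0 : Fin 2)) ?_⟩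
  have hpow : (X 0 : MvPolynomial (Fin 2) K) ^ (k+1) = X 0 * X 0 ^ k := by ring
  linear_combination (-f) * hu₁ + h + hw - v * hpow

end EdgeSchemeAux

open EdgeSchemeAux

theorem edge_scheme_equations {K : Type*} [Field K] (a b c d : K) :
    Ideal.span ({(X 1) ^ 2 + C a * X 0 * X 1 + C b * (X 0) ^ 2, (X 0) ^ 5} :
        Set (MvPolynomial (Fin 2) K)) =
      Ideal.span ({(X 1) ^ 5, (X 0) ^ 2 + C c * X 0 * X 1 + C d * (X 1) ^ 2} :
        Set (MvPolynomial (Fin 2) K)) ↔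
    (a ^ 4 - 3 * a ^ 2 * b + b ^ 2 = 0 ∧ c = a * d ∧ b * d = 1) := by
  set f : MvPolynomial (Fin 2) K := (X 1) ^ 2 + C a * X 0 * X 1 + C b * (X 0) ^ 2 with hf
  have hfψ : psi K f = (X 1)^2 := by simp [hf]
  have hy2 : ((X 1 : MvPolynomial (Fin 2) K))^2 ≠ 0 := pow_ne_zero 2 (X_ne_zero 1)
  constructor
  · intro h
    -- Part A : g ∈ I gives c = a*d and b*d = 1
    have hg : (X 0) ^ 2 + C c * X 0 * X 1 + C d * (X 1) ^ 2 ∈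
        Ideal.span ({f, (X 0) ^ 5} : Set (MvPolynomial (Fin 2) K)) := by
      rw [h]; exact Ideal.subset_span (by simp)
    rw [Ideal.mem_span_pair] at hg
    obtain ⟨p, q, hpq⟩ := hg
    have hpq' : p * f + q * X 0 ^ (4+1) = (X 0) ^ 2 + C c * X 0 * X 1 + C d * (X 1) ^ 2 := hpq
    have h0ψ := psi_eq 4 hfψ hpq'
    simp only [map_add, map_mul, map_pow, psi_X0, psi_X1, psi_C] at h0ψ
    ring_nf at h0ψ
    have hp0 : psi K p = C d := mul_right_cancel₀ hy2 (by linear_combination h0ψ)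
    obtain ⟨p₁, h1⟩ := peel 4 hp0 hpq'
      (w' := (1 - C b * C d) * X 0 + (C c - C a * C d) * X 1) (by rw [hf]; ring)
    have h1ψ := psi_eq 3 hfψ h1
    simp only [map_add, map_mul, map_sub, map_one, psi_X0, psi_X1, psi_C, mul_zero,
      zero_mul, zero_add, add_zero, sub_zero] at h1ψ
    have hcd : c = a * d := by
      have hco := congrArg (coeff (Finsupp.single 1 1)) h1ψ
      rw [coeff_y_mul_ysq] at hco
      have hCsub : (C c - C a * C d : MvPolynomial (Fin 2) K) = C (c - a * d) := by
        simp [map_sub, map_mul]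
      rw [hCsub, coeff_C_mul, coeff_X] at hco
      rw [if_pos rfl] at hco
      linear_combination -hco
    have hz : (C c - C a * C d : MvPolynomial (Fin 2) K) = 0 := by
      rw [hcd]; simp [map_mul]
    have hp1 : psi K p₁ = 0 := by
      rw [hz, zero_mul] at h1ψ
      exact (mul_eq_zero.mp h1ψ).resolve_right hy2
    obtain ⟨p₂, h2⟩ := peel 3 hp1 h1 (w' := 1 - C b * C d) (by linear_combination X 1 * hz)
    have h2ψ := psi_eq 2 hfψ h2
    have hbd : b * d = 1 := by
      have hco := congrArg (coeff 0) h2ψ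
      rw [coeff_zero_mul_ysq] at hco
      have hCsub : (psi K) (1 - C b * C d : MvPolynomial (Fin 2) K) = C (1 - b * d) := by
        simp [map_sub, map_mul, map_one]
      rw [hCsub, coeff_C] at hco
      norm_num at hco
      linear_combination hco
    refine ⟨?_, hcd, hbd⟩
    -- Part B : y^5 ∈ I gives the quartic relation
    have hy5 : (X 1) ^ 5 ∈ Ideal.span ({f, (X 0) ^ 5} : Set (MvPolynomial (Fin 2) K)) := by
      rw [h]; exact Ideal.subset_span (by simp)
    rw [Ideal.mem_span_pair] at hy5
    obtain ⟨r, s, hrs⟩ := hy5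
    have hrs' : r * f + s * X 0 ^ (4+1) = (X 1) ^ 5 := hrs
    have g0ψ := psi_eq 4 hfψ hrs'
    simp only [map_pow, psi_X1] at g0ψ
    have hr0 : psi K r = (X 1)^3 :=
      mul_right_cancel₀ hy2 (by linear_combination g0ψ)
    obtain ⟨r₁, g1⟩ := peel 4 hr0 hrs'
      (w' := -(C a) * (X 1)^4 - C b * X 0 * (X 1)^3) (by rw [hf]; ring)
    have g1ψ := psi_eq 3 hfψ g1
    simp only [map_add, map_mul, map_sub, map_neg, map_pow, psi_X0, psi_X1, psi_C, mul_zero,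
      zero_mul, zero_add, add_zero, sub_zero, neg_zero, map_ofNat] at g1ψ
    have hr1 : psi K r₁ = -(C a) * (X 1)^2 :=
      mul_right_cancel₀ hy2 (by linear_combination g1ψ)
    obtain ⟨r₂, g2⟩ := peel 3 hr1 g1
      (w' := ((C a)^2 - C b) * (X 1)^3 + C a * C b * X 0 * (X 1)^2) (by rw [hf]; ring)
    have g2ψ := psi_eq 2 hfψ g2
    simp only [map_add, map_mul, map_sub, map_neg, map_pow, psi_X0, psi_X1, psi_C, mul_zero,
      zero_mul, zero_add, add_zero, sub_zero, neg_zero, map_ofNat] at g2ψ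
    have hr2 : psi K r₂ = ((C a)^2 - C b) * X 1 :=
      mul_right_cancel₀ hy2 (by linear_combination g2ψ)
    obtain ⟨r₃, g3⟩ := peel 2 hr2 g2
      (w' := (2*C a*C b - (C a)^3) * (X 1)^2 + ((C b)^2 - (C a)^2*C b) * X 0 * X 1)
      (by rw [hf]; ring)
    have g3ψ := psi_eq 1 hfψ g3
    simp only [map_add, map_mul, map_sub, map_neg, map_pow, psi_X0, psi_X1, psi_C, mul_zero,
      zero_mul, zero_add, add_zero, sub_zero, neg_zero, map_ofNat] at g3ψ
    have hr3 : psi K r₃ = 2*C a*C b - (C a)^3 :=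
      mul_right_cancel₀ hy2 (by linear_combination g3ψ)
    obtain ⟨r₄, g4⟩ := peel 1 hr3 g3
      (w' := ((C a)^4 - 3*(C a)^2*C b + (C b)^2) * X 1 + ((C a)^3*C b - 2*C a*(C b)^2) * X 0)
      (by rw [hf]; ring)
    have g4ψ := psi_eq 0 hfψ g4
    simp only [map_add, map_mul, map_sub, map_neg, map_pow, psi_X0, psi_X1, psi_C, mul_zero,
      zero_mul, zero_add, add_zero, sub_zero, neg_zero, map_ofNat] at g4ψ
    have hE : ((C a:MvPolynomial (Fin 2) K)^4 - 3*(C a)^2*C b + (C b)^2) =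
        C (a^4 - 3*a^2*b + b^2) := by
      simp [map_sub, map_add, map_mul, map_pow, map_ofNat]
    rw [hE] at g4ψ
    have hco := congrArg (coeff (Finsupp.single 1 1)) g4ψ
    rw [coeff_y_mul_ysq, coeff_C_mul, coeff_X] at hco
    rw [if_pos rfl] at hco
    linear_combination -hco
  · rintro ⟨h1, rfl, h3⟩
    have h1C' : ((C a : MvPolynomial (Fin 2) K))^4 - 3*(C a)^2*C b + (C b)^2 = 0 := by
      have h1C : (C (a^4 - 3*a^2*b + b^2) : MvPolynomial (Fin 2) K) = 0 := by
        rw [h1, map_zero]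
      rw [← h1C]; simp [map_sub, map_add, map_mul, map_pow, map_ofNat]
    have h3C : (C b * C d : MvPolynomial (Fin 2) K) = 1 := by
      rw [← map_mul, h3, map_one]
    have hCad : (C (a*d) : MvPolynomial (Fin 2) K) = C a * C d := map_mul _ _ _
    have hE'C : ((C a * C d : MvPolynomial (Fin 2) K))^4 - 3*(C a * C d)^2*(C d) + (C d)^2
        = 0 := by
      have hE' : (a*d)^4 - 3*(a*d)^2*d + d^2 = 0 := by
        linear_combination d^4 * h1 + (3*a^2*d^3 - b*d^3 - d^2) * h3
      have h2 := congrArg (MvPolynomial.C (σ := Fin 2)) hE'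
      rw [map_zero] at h2
      rw [← h2]; simp [map_sub, map_add, map_mul, map_pow, map_ofNat]
    apply le_antisymm <;> rw [Ideal.span_le, Set.insert_subset_iff, Set.singleton_subset_iff]
    · constructor
      · -- f ∈ J
        rw [SetLike.mem_coe, Ideal.mem_span_pair]
        refine ⟨0, C b, ?_⟩
        rw [hf, hCad]
        linear_combination (C a * X 0 * X 1 + (X 1:MvPolynomial (Fin 2) K)^2) * h3C
      · -- x^5 ∈ J
        rw [SetLike.mem_coe, Ideal.mem_span_pair]
        refine ⟨(C a)^3*(C d)^4 - 2*C a*(C d)^3,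
          (X 0)^3 - (C a * C d) * (X 0)^2 * X 1 + ((C a * C d)^2 - C d) * X 0 * (X 1)^2
            + (2*(C a * C d)*C d - (C a * C d)^3) * (X 1)^3, ?_⟩
        rw [hCad]
        linear_combination (-(X 0) * (X 1:MvPolynomial (Fin 2) K)^4) * hE'C
    · constructor
      · -- y^5 ∈ I
        rw [SetLike.mem_coe, Ideal.mem_span_pair]
        refine ⟨(X 1)^3 - C a * X 0 * (X 1)^2 + ((C a)^2 - C b) * (X 0)^2 * X 1
            + (2*C a*C b - (C a)^3) * (X 0)^3, (C a)^3*C b - 2*C a*(C b)^2, ?_⟩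
        rw [hf]
        linear_combination (-(X 0:MvPolynomial (Fin 2) K)^4 * X 1) * h1C'
      · -- g ∈ I
        rw [SetLike.mem_coe, Ideal.mem_span_pair]
        refine ⟨C d, 0, ?_⟩
        rw [hf, hCad]
        linear_combination ((X 0:MvPolynomial (Fin 2) K)^2) * h3C
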